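/- Let φ : ℝ → ℝ be the logistic function φ(x) = (1 + exp(−x))^{−1}. Then for every n ≥ 1, the n-th derivative of φ satisfies sup_{x ∈ ℝ} |φ^{(n)}(x)| ≤ n! / 2^{n+1}. -/

import Mathlib

open Real Metric NNReal

noncomputable def Hc : ℂ → ℂ := fun z => (Complex.exp z + Complex.exp (-z) + 2)⁻¹

noncomputable def Wc : ℂ → ℂ := fun z => Complex.exp (z/2) + Complex.exp (-(z/2))

lemma wsq (z : ℂ) : Wc z ^ 2 = Complex.exp z + Complex.exp (-z) + 2 := by
  have h1 : Complex.exp (z/2) * Complex.exp (z/2) = Complex.exp z := by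
    rw [← Complex.exp_add]; ring_nf
  have h2 : Complex.exp (-(z/2)) * Complex.exp (-(z/2)) = Complex.exp (-z) := by
    rw [← Complex.exp_add]; ring_nf
  have h3 : Complex.exp (z/2) * Complex.exp (-(z/2)) = 1 := by
    rw [← Complex.exp_add]; simp
  simp only [Wc]
  linear_combination h1 + h2 + 2 * h3

lemma wre (z : ℂ) : (Wc z).re = (Real.exp (z.re/2) + Real.exp (-(z.re/2))) * Real.cos (z.im/2) := by
  simp only [Wc, Complex.add_re, Complex.exp_re, Complex.neg_re, Complex.neg_im,
    Complex.div_ofNat_re, Complex.div_ofNat_im, Real.cos_neg, neg_div]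
  ring

lemma exp_add_exp_neg (a : ℝ) : 2 ≤ Real.exp a + Real.exp (-a) := by
  have h := Real.exp_pos a
  have h2 : Real.exp a * Real.exp (-a) = 1 := by rw [← Real.exp_add]; simp
  nlinarith [sq_nonneg (Real.exp a - 1)]

lemma wre_pos {z : ℂ} (hz : |z.im| < 5/2) : 0 < (Wc z).re := by
  rw [wre]
  have hc : 0 < Real.cos (z.im/2) := by
    have := Real.one_sub_sq_div_two_le_cos (x := z.im/2)
    have h1 : (z.im/2)^2 < (5/4)^2 := by
      have : |z.im/2| < 5/4 := by rw [abs_div]; simp; nlinarith [abs_nonneg z.im]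
      nlinarith [abs_nonneg (z.im/2), sq_abs (z.im/2), abs_div z.im 2]
    nlinarith
  nlinarith [exp_add_exp_neg (z.re/2)]

lemma denom_ne {z : ℂ} (hz : |z.im| < 5/2) : Complex.exp z + Complex.exp (-z) + 2 ≠ 0 := by
  rw [← wsq]
  exact pow_ne_zero _ (fun h => by simpa [h] using (wre_pos hz).ne')

lemma denom_ge {z : ℂ} (hz : |z.im| ≤ 2) : 1 ≤ ‖Complex.exp z + Complex.exp (-z) + 2‖ := by
  rw [← wsq, norm_pow]
  have h1 : 1 ≤ (Wc z).re := by
    rw [wre]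
    have hc : 1/2 ≤ Real.cos (z.im/2) := by
      have := Real.one_sub_sq_div_two_le_cos (x := z.im/2)
      have h1 : (z.im/2)^2 ≤ 1 := by
        nlinarith [sq_abs z.im, abs_nonneg z.im]
      nlinarith
    nlinarith [exp_add_exp_neg (z.re/2)]
  have h2 : |(Wc z).re| ≤ ‖Wc z‖ := by
    simpa using Complex.abs_re_le_norm (Wc z)
  nlinarith [norm_nonneg (Wc z), abs_le.mp h2]

lemma Hc_bound {z : ℂ} (hz : |z.im| ≤ 2) : ‖Hc z‖ ≤ 1 := by
  simp only [Hc, norm_inv]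
  have := denom_ge hz
  have h0 : (0:ℝ) < ‖Complex.exp z + Complex.exp (-z) + 2‖ := by linarith
  rw [inv_le_one_iff₀]; right; exact this

noncomputable def Uc : Set ℂ := Complex.im ⁻¹' Metric.ball (0:ℝ) (5/2)

lemma mem_Uc {z : ℂ} : z ∈ Uc ↔ |z.im| < 5/2 := by
  simp [Uc, Metric.mem_ball, Real.dist_eq]

lemma Hc_diffOn : DifferentiableOn ℂ Hc Uc := by
  apply DifferentiableOn.inv
  · exact (((Complex.differentiable_exp).add
      (Complex.differentiable_exp.comp differentiable_neg)).add_const 2).differentiableOn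
  · intro z hz
    exact denom_ne (mem_Uc.mp hz)

lemma Uc_open : IsOpen Uc := (Metric.isOpen_ball).preimage Complex.continuous_im

lemma Hc_iter_analytic (m : ℕ) : AnalyticOnNhd ℂ (iteratedDeriv m Hc) Uc := by
  have h0 : AnalyticOnNhd ℂ Hc Uc := Hc_diffOn.analyticOnNhd Uc_open
  have := h0.iterated_deriv m
  rwa [← iteratedDeriv_eq_iterate] at this

lemma bridge (m : ℕ) : ∀ x : ℝ,
    iteratedDeriv m (fun t : ℝ => (Real.exp t + Real.exp (-t) + 2)⁻¹) x
      = (iteratedDeriv m Hc x).re := by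
  induction m with
  | zero =>
    intro x
    simp only [iteratedDeriv_zero, Hc]
    have : ((Real.exp x + Real.exp (-x) + 2 : ℝ) : ℂ) = Complex.exp ↑x + Complex.exp (-↑x) + 2 := by
      push_cast [Complex.ofReal_exp]
      ring
    rw [← this, ← Complex.ofReal_inv, Complex.ofReal_re]
  | succ m ih =>
    intro x
    have hx : (↑x : ℂ) ∈ Uc := by rw [mem_Uc]; simp
    have hd : HasDerivAt (iteratedDeriv m Hc) (iteratedDeriv (m+1) Hc ↑x) ↑x := by
      rw [iteratedDeriv_succ]
      exact ((Hc_iter_analytic m ↑x hx).differentiableAt).hasDerivAt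
    have hr := hd.real_of_complex
    calc iteratedDeriv (m+1) (fun t : ℝ => (Real.exp t + Real.exp (-t) + 2)⁻¹) x
        = deriv (iteratedDeriv m (fun t : ℝ => (Real.exp t + Real.exp (-t) + 2)⁻¹)) x := by
          rw [iteratedDeriv_succ]
      _ = deriv (fun y : ℝ => (iteratedDeriv m Hc ↑y).re) x := by
          congr 1; funext y; exact ih y
      _ = (iteratedDeriv (m+1) Hc ↑x).re := hr.deriv


lemma cauchy_bound {f : ℂ → ℂ} {c : ℂ} {M : ℝ}
    (hf : DifferentiableOn ℂ f (Metric.closedBall c 2))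
    (hb : ∀ z ∈ Metric.closedBall c 2, ‖f z‖ ≤ M) (m : ℕ) :
    ‖iteratedDeriv m f c‖ ≤ m.factorial * M / 2 ^ m := by
  have h2 : (0:ℝ≥0) < 2 := by norm_num
  have hf' : DifferentiableOn ℂ f (Metric.closedBall c ((2:ℝ≥0):ℝ)) := by
    simpa using hf
  have hps : HasFPowerSeriesOnBall f (cauchyPowerSeries f c 2) c 2 :=
    hf'.hasFPowerSeriesOnBall h2
  have key := hps.factorial_smul (1:ℂ) m
  rw [iteratedDeriv_eq_iteratedFDeriv, ← key, nsmul_eq_mul]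
  have hM : 0 ≤ M := le_trans (norm_nonneg _) (hb c (Metric.mem_closedBall_self (by norm_num)))
  -- continuity of the integrand
  have hmap : ∀ θ : ℝ, circleMap c 2 θ ∈ Metric.closedBall c 2 := fun θ =>
    Metric.sphere_subset_closedBall (circleMap_mem_sphere c (by norm_num) θ)
  have hcont : ContinuousOn (fun θ : ℝ => ‖f (circleMap c 2 θ)‖) (Set.Icc 0 (2*π)) := by
    apply ContinuousOn.norm
    exact hf.continuousOn.comp (continuous_circleMap c 2).continuousOn (fun θ _ => hmap θ)
  have hintg : IntervalIntegrable (fun θ : ℝ => ‖f (circleMap c 2 θ)‖) MeasureTheory.volume 0 (2*π) :=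
    (hcont.mono (by rw [Set.uIcc_of_le (by positivity)])).intervalIntegrable
  have hint : (∫ θ in (0:ℝ)..2*π, ‖f (circleMap c 2 θ)‖) ≤ 2*π*M := by
    calc (∫ θ in (0:ℝ)..2*π, ‖f (circleMap c 2 θ)‖)
        ≤ ∫ _ in (0:ℝ)..2*π, M := by
          apply intervalIntegral.integral_mono_on (by positivity) hintg intervalIntegrable_const
          exact fun θ _ => hb _ (hmap θ)
      _ = 2*π*M := by simp [mul_comm]
  have hpm := norm_cauchyPowerSeries_le f c 2 m
  have happ : ‖(cauchyPowerSeries f c 2 m) (fun _ : Fin m => (1:ℂ))‖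
      ≤ ‖cauchyPowerSeries f c 2 m‖ := by
    have := (cauchyPowerSeries f c 2 m).le_opNorm (fun _ : Fin m => (1:ℂ))
    simpa using this
  have hnorm : ‖cauchyPowerSeries f c 2 m‖ ≤ M / 2 ^ m := by
    refine hpm.trans ?_
    have habs : |(2:ℝ)|⁻¹ ^ m = ((2:ℝ)^m)⁻¹ := by
      rw [abs_of_pos (by norm_num : (0:ℝ) < 2), inv_pow]
    rw [habs]
    rw [div_eq_mul_inv]
    apply mul_le_mul_of_nonneg_right _ (by positivity)
    calc (2 * π)⁻¹ * ∫ θ : ℝ in (0)..2 * π, ‖f (circleMap c 2 θ)‖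
        ≤ (2 * π)⁻¹ * (2*π*M) := by
          apply mul_le_mul_of_nonneg_left hint (by positivity)
      _ = M := by field_simp
  rw [norm_mul]
  calc ‖(m.factorial : ℂ)‖ * ‖(cauchyPowerSeries f c 2 m) (fun _ : Fin m => (1:ℂ))‖
      ≤ (m.factorial : ℝ) * (M / 2 ^ m) := by
        apply mul_le_mul _ (happ.trans hnorm) (norm_nonneg _) (by positivity)
        · simp
    _ = m.factorial * M / 2 ^ m := by ring

noncomputable def g : ℝ → ℝ := fun t => (Real.exp t + Real.exp (-t) + 2)⁻¹
noncomputable def g1 : ℝ → ℝ := fun t =>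
  -(Real.exp t - Real.exp (-t)) / (Real.exp t + Real.exp (-t) + 2)^2
noncomputable def g2 : ℝ → ℝ := fun t =>
  ((Real.exp t + Real.exp (-t) + 2)^2 - 6*(Real.exp t + Real.exp (-t) + 2))
    / (Real.exp t + Real.exp (-t) + 2)^3

lemma u_pos (t : ℝ) : 0 < Real.exp t + Real.exp (-t) + 2 := by positivity

lemma u_ge (t : ℝ) : 4 ≤ Real.exp t + Real.exp (-t) + 2 := by
  have := exp_add_exp_neg t; linarith

lemma hasDerivAt_expneg (t : ℝ) : HasDerivAt (fun s : ℝ => Real.exp (-s)) (-Real.exp (-t)) t := by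
  simpa [Function.comp_def] using (Real.hasDerivAt_exp (-t)).comp t (hasDerivAt_neg t)

lemma hu (t : ℝ) : HasDerivAt (fun s : ℝ => Real.exp s + Real.exp (-s) + 2)
    (Real.exp t - Real.exp (-t)) t := by
  simpa [sub_eq_add_neg] using ((Real.hasDerivAt_exp t).add (hasDerivAt_expneg t)).add_const 2

lemma hg (t : ℝ) : HasDerivAt g (g1 t) t := by
  have : HasDerivAt g _ t := (hu t).inv (u_pos t).ne'
  simpa [g, g1, neg_div] using this

lemma hphi (t : ℝ) : HasDerivAt (fun s : ℝ => (1 + Real.exp (-s))⁻¹) (g t) t := by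
  have h1 : HasDerivAt (fun s : ℝ => 1 + Real.exp (-s)) (-Real.exp (-t)) t :=
    (hasDerivAt_expneg t).const_add 1
  have h0 : (0:ℝ) < 1 + Real.exp (-t) := by positivity
  have h2 : HasDerivAt (fun s : ℝ => (1 + Real.exp (-s))⁻¹) _ t := h1.inv h0.ne'
  convert h2 using 1
  rw [g, Real.exp_neg]
  have hE := Real.exp_pos t
  field_simp
  ring

lemma hg1 (t : ℝ) : HasDerivAt g1 (g2 t) t := by
  have hv : HasDerivAt (fun s : ℝ => -(Real.exp s - Real.exp (-s)))
      (-(Real.exp t + Real.exp (-t))) t := by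
    exact (((Real.hasDerivAt_exp t).sub (hasDerivAt_expneg t)).neg :
      HasDerivAt (fun s : ℝ => -(Real.exp s - Real.exp (-s))) _ t).congr_deriv (by ring)
  have hu2 : HasDerivAt (fun s : ℝ => (Real.exp s + Real.exp (-s) + 2)^2)
      (2 * (Real.exp t + Real.exp (-t) + 2)^1 * (Real.exp t - Real.exp (-t))) t :=
    (hu t).pow 2
  have hd : HasDerivAt g1 _ t := hv.div hu2 (by positivity)
  convert hd using 1
  rw [g2, Real.exp_neg]
  have hE := Real.exp_pos t
  have hE' := (Real.exp_pos t).ne'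
  have hu0 : (0:ℝ) < Real.exp t + (Real.exp t)⁻¹ + 2 := by positivity
  field_simp
  ring

lemma b0 (t : ℝ) : |g t| ≤ 1/4 := by
  have h4 := u_ge t
  have h0 := u_pos t
  rw [g, abs_of_pos (by positivity)]
  rw [inv_le_comm₀ h0 (by norm_num)]
  linarith

lemma b1 (t : ℝ) : |g1 t| ≤ 1/4 := by
  have h0 := u_pos t
  have hE := Real.exp_pos t
  have hF := Real.exp_pos (-t)
  have hEF : Real.exp t * Real.exp (-t) = 1 := by rw [← Real.exp_add]; simp
  rw [g1, abs_le]
  constructor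
  · rw [neg_le, ← neg_div, div_le_iff₀ (by positivity)]
    nlinarith
  · rw [div_le_iff₀ (by positivity)]
    nlinarith

lemma b2 (t : ℝ) : |g2 t| ≤ 3/8 := by
  have h0 := u_pos t
  have h4 := u_ge t
  rw [g2, abs_le]
  set u := Real.exp t + Real.exp (-t) + 2 with hu_def
  clear_value u
  have h1 : 4*u ≤ u^2 := by nlinarith
  have h2 : 4*u^2 ≤ u^3 := by nlinarith
  have h3 : (0:ℝ) ≤ u^2 := sq_nonneg u
  constructor
  · rw [neg_le, ← neg_div, div_le_iff₀ (by positivity)]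
    linarith
  · rw [div_le_iff₀ (by positivity)]
    linarith

lemma closedBall_subset_Uc (x : ℝ) : Metric.closedBall (x:ℂ) 2 ⊆ Uc := by
  intro z hz
  rw [mem_Uc]
  have h1 : |z.im| ≤ 2 := by
    have : |(z - (x:ℂ)).im| ≤ ‖z - (x:ℂ)‖ := Complex.abs_im_le_norm _
    simp only [Complex.sub_im, Complex.ofReal_im, sub_zero] at this
    calc |z.im| ≤ ‖z - (x:ℂ)‖ := this
      _ ≤ 2 := by
        rw [Metric.mem_closedBall, Complex.dist_eq] at hz; exact hz
  linarith

lemma im_le_two_of_mem {x : ℝ} {z : ℂ} (hz : z ∈ Metric.closedBall (x:ℂ) 2) : |z.im| ≤ 2 := by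
  have : |(z - (x:ℂ)).im| ≤ ‖z - (x:ℂ)‖ := Complex.abs_im_le_norm _
  simp only [Complex.sub_im, Complex.ofReal_im, sub_zero] at this
  calc |z.im| ≤ ‖z - (x:ℂ)‖ := this
    _ ≤ 2 := by rw [Metric.mem_closedBall, Complex.dist_eq] at hz; exact hz

lemma tail_bound (k : ℕ) (hk : 3 ≤ k) (x : ℝ) :
    |iteratedDeriv k g x| ≤ ((k+1).factorial : ℝ) / 2 ^ (k + 2) := by
  have hbr : iteratedDeriv k g x = (iteratedDeriv k Hc x).re := bridge k x
  have hdiff : DifferentiableOn ℂ Hc (Metric.closedBall (x:ℂ) 2) :=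
    Hc_diffOn.mono (closedBall_subset_Uc x)
  have hb : ∀ z ∈ Metric.closedBall (x:ℂ) 2, ‖Hc z‖ ≤ 1 := fun z hz =>
    Hc_bound (im_le_two_of_mem hz)
  have hc := cauchy_bound hdiff hb k
  have hre : |iteratedDeriv k g x| ≤ ‖iteratedDeriv k Hc (x:ℂ)‖ := by
    rw [hbr]
    exact Complex.abs_re_le_norm _
  have hfin : (k.factorial : ℝ) * 1 / 2 ^ k ≤ ((k+1).factorial : ℝ) / 2 ^ (k + 2) := by
    rw [mul_one, div_le_div_iff₀ (by positivity) (by positivity)]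
    have hfac : ((k+1).factorial : ℝ) = (k+1) * k.factorial := by
      rw [Nat.factorial_succ]; push_cast; ring
    rw [hfac, pow_add]
    have h3 : (4:ℝ) ≤ (k:ℝ) + 1 := by
      have : (3:ℝ) ≤ (k:ℝ) := by exact_mod_cast hk
      linarith
    have h5 := mul_le_mul_of_nonneg_right h3
      (by positivity : (0:ℝ) ≤ (k.factorial:ℝ) * 2^k)
    nlinarith
  exact hre.trans (hc.trans hfin)

/-- The iterated derivatives of the logistic function
`φ(x) = (1 + exp(-x))⁻¹` satisfy `sup_x |φ^{(n)}(x)| ≤ n! / 2^{n+1}` for every `n ≥ 1`. -/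
theorem logistic_iterated_deriv_bound (n : ℕ) (hn : 1 ≤ n) (x : ℝ) :
    |iteratedDeriv n (fun t : ℝ => (1 + Real.exp (-t))⁻¹) x|
      ≤ (n.factorial : ℝ) / 2 ^ (n + 1) := by
  obtain ⟨k, rfl⟩ : ∃ k, n = k + 1 := ⟨n - 1, by omega⟩
  have hderiv_phi : deriv (fun t : ℝ => (1 + Real.exp (-t))⁻¹) = g :=
    funext fun t => (hphi t).deriv
  rw [iteratedDeriv_succ', hderiv_phi]
  match k with
  | 0 =>
    simp only [iteratedDeriv_zero]
    calc |g x| ≤ 1/4 := b0 x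
      _ ≤ ((Nat.factorial 1 : ℕ) : ℝ) / 2 ^ (0 + 1 + 1) := by norm_num
  | 1 =>
    rw [iteratedDeriv_one, funext fun t => (hg t).deriv]
    calc |g1 x| ≤ 1/4 := b1 x
      _ ≤ ((Nat.factorial 2 : ℕ) : ℝ) / 2 ^ (1 + 1 + 1) := by norm_num
  | 2 =>
    rw [iteratedDeriv_succ', funext fun t => (hg t).deriv, iteratedDeriv_one,
      funext fun t => (hg1 t).deriv]
    calc |g2 x| ≤ 3/8 := b2 x
      _ ≤ ((Nat.factorial 3 : ℕ) : ℝ) / 2 ^ (2 + 1 + 1) := by norm_num [Nat.factorial]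
  | (m+3) =>
    have := tail_bound (m+3) (by omega) x
    convert this using 2 <;> ring_nf
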